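/- If a Davenport–Schinzel sequence of order 3 on n symbols (no immediate repetitions, no alternating subsequence a,b,a,b,a of length 5) exists, then its length is at most C·n·α(n) for some universal constant C, where α is the inverse Ackermann function; in particular, its length is O(n log n). -/

import Mathlib

/-- A sequence has no two consecutive equal entries. -/
def NoRepeat {L n : ℕ} (u : Fin L → Fin n) : Prop :=
  ∀ (i : Fin L) (h : i.val + 1 < L), u i ≠ u ⟨i.val + 1, h⟩

/-- The sequence `u` contains an alternating subsequence `a b a b …` of length `len`
for two distinct symbols `a`, `b`. -/
def HasAlt {L n : ℕ} (u : Fin L → Fin n) (len : ℕ) : Prop :=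
  ∃ (a b : Fin n) (idx : Fin len → Fin L), a ≠ b ∧ StrictMono idx ∧
    ∀ j : Fin len, u (idx j) = if j.val % 2 = 0 then a else b

/-- `u` is a Davenport–Schinzel sequence of order `s`: no immediate repetitions and no
alternating subsequence of length `s + 2`. -/
def IsDS (s : ℕ) {L n : ℕ} (u : Fin L → Fin n) : Prop :=
  NoRepeat u ∧ ¬ HasAlt u (s + 2)

/-- `lambdaDS s m` is the maximum length of a Davenport–Schinzel sequence of order `s`
on `m` symbols. -/
noncomputable def lambdaDS (s m : ℕ) : ℕ :=
  sSup {L : ℕ | ∃ u : Fin L → Fin m, IsDS s u}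

namespace DS3Aux
open List

variable {α : Type*} [DecidableEq α]



/-- no `a b a b` sublist with distinct symbols -/
def NoAbab (l : List α) : Prop := ∀ a b : α, a ≠ b → ¬ ([a,b,a,b] <+ l)

/-- no `a b a b a` sublist with distinct symbols -/
def NoAbaba (l : List α) : Prop := ∀ a b : α, a ≠ b → ¬ ([a,b,a,b,a] <+ l)

lemma NoAbab.sublist {l l' : List α} (h : NoAbab l) (hs : l' <+ l) : NoAbab l' :=
  fun a b hab hsub => h a b hab (hsub.trans hs)

lemma NoAbaba.sublist {l l' : List α} (h : NoAbaba l) (hs : l' <+ l) : NoAbaba l' :=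
  fun a b hab hsub => h a b hab (hsub.trans hs)

lemma firstSplit {x : α} : ∀ {t : List α}, x ∈ t → ∃ t₁ t₂, t = t₁ ++ x :: t₂ ∧ x ∉ t₁ := by
  intro t hx
  induction t with
  | nil => simp at hx
  | cons a t ih =>
    by_cases hax : a = x
    · exact ⟨[], t, by simp [hax], by simp⟩
    · have hx' : x ∈ t := by
        rcases List.mem_cons.1 hx with h | h
        · exact absurd h.symm hax
        · exact h
      obtain ⟨t₁, t₂, ht, hnx⟩ := ih hx'
      refine ⟨a :: t₁, t₂, by simp [ht], ?_⟩
      simp only [List.mem_cons, not_or]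
      exact ⟨fun h => hax h.symm, hnx⟩

lemma ds2_ne : ∀ (N : ℕ) (l : List α), l.length ≤ N → l.Chain' (· ≠ ·) → NoAbab l →
    l ≠ [] → l.length + 1 ≤ 2 * l.toFinset.card := by
  intro N
  induction N with
  | zero => intro l hl _ _ hne; cases l with
    | nil => exact absurd rfl hne
    | cons a t => simp at hl
  | succ N ih =>
    intro l hlen hchain hab hne
    obtain ⟨x, t, rfl⟩ := List.exists_cons_of_ne_nil hne
    by_cases hxt : x ∈ t
    · obtain ⟨t₁, t₂, rfl, hx1⟩ := firstSplit hxt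
      -- t₁ nonempty
      have ht1ne : t₁ ≠ [] := by
        rintro rfl
        simp only [List.nil_append] at hchain
        exact (List.isChain_cons_cons.1 hchain).1 rfl
      -- chain facts
      have hchain' : (x :: t₁).Chain' (· ≠ ·) ∧ (x :: t₂).Chain' (· ≠ ·) := by
        have : ((x :: t₁) ++ x :: t₂).Chain' (· ≠ ·) := by simpa using hchain
        exact ⟨(List.isChain_append.1 this).1, (List.isChain_append.1 this).2.1⟩
      have hct1 : t₁.Chain' (· ≠ ·) := hchain'.1.tail
      have hct2 : (x :: t₂).Chain' (· ≠ ·) := hchain'.2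
      -- sublists
      have hsub1 : t₁ <+ x :: (t₁ ++ x :: t₂) :=
        (List.sublist_append_left t₁ (x :: t₂)).cons x
      have hsub2 : (x :: t₂) <+ x :: (t₁ ++ x :: t₂) :=
        (List.sublist_append_right t₁ (x :: t₂)).cons x
      -- disjointness of symbols
      have hdisj : ∀ y ∈ t₁, y ∉ (x :: t₂) := by
        intro y hy hy2
        have hyx : y ≠ x := fun h => hx1 (h ▸ hy)
        have hy2' : y ∈ t₂ := by
          rcases List.mem_cons.1 hy2 with h | h
          · exact absurd h hyx
          · exact h
        -- build [x,y,x,y] sublist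
        have hpat : [x, y, x, y] <+ x :: (t₁ ++ x :: t₂) := by
          refine List.Sublist.cons₂ x ?_
          have h1 : [y] <+ t₁ := List.singleton_sublist.2 hy
          have h2 : [x, y] <+ x :: t₂ := List.Sublist.cons₂ x (List.singleton_sublist.2 hy2')
          simpa using h1.append h2
        exact hab x y (fun h => hyx h.symm) hpat
      -- cards
      have hfin : (x :: (t₁ ++ x :: t₂)).toFinset = t₁.toFinset ∪ (x :: t₂).toFinset := by
        ext z
        simp only [List.toFinset_cons, List.toFinset_append, Finset.mem_union, Finset.mem_insert,
          List.mem_toFinset, List.mem_cons]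
        tauto
      have hdisj' : Disjoint t₁.toFinset (x :: t₂).toFinset := by
        rw [Finset.disjoint_left]
        intro z hz hz2
        exact hdisj z (List.mem_toFinset.1 hz) (List.mem_toFinset.1 hz2)
      have hcard : (x :: (t₁ ++ x :: t₂)).toFinset.card =
          t₁.toFinset.card + (x :: t₂).toFinset.card := by
        rw [hfin, Finset.card_union_of_disjoint hdisj']
      -- lengths
      have hlt1 : t₁.length ≤ N := by
        simp only [List.length_cons, List.length_append] at hlen; omega
      have hlt2 : (x :: t₂).length ≤ N := by
        have h1 : 1 ≤ t₁.length := List.length_pos_iff.2 ht1ne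
        simp only [List.length_cons, List.length_append] at hlen ⊢; omega
      have ih1 := ih t₁ hlt1 hct1 (hab.sublist hsub1) ht1ne
      have ih2 := ih (x :: t₂) hlt2 hct2 (hab.sublist hsub2) (by simp)
      have hleq : (x :: (t₁ ++ x :: t₂)).length = t₁.length + (x :: t₂).length + 1 := by
        simp [List.length_append]
      omega
    · -- x ∉ t
      have hfin : (x :: t).toFinset.card = t.toFinset.card + 1 := by
        simp only [List.toFinset_cons]
        rw [Finset.card_insert_of_notMem (by simpa using hxt)]
      cases t with
      | nil => simp
      | cons y s =>
        have ih1 := ih (y :: s) (by simp at hlen ⊢; omega) hchain.tail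
          (hab.sublist (List.sublist_cons_self x (y::s))) (by simp)
        simp only [List.length_cons] at ih1 ⊢
        omega

lemma ds2 (l : List α) (h1 : l.Chain' (· ≠ ·)) (h2 : NoAbab l) :
    l.length ≤ 2 * l.toFinset.card := by
  rcases eq_or_ne l [] with rfl | hne
  · simp
  · have := ds2_ne l.length l le_rfl h1 h2 hne
    omega




/-- count of adjacent equal pairs -/
def adjEq : List α → ℕ
  | x :: y :: t => (if x = y then 1 else 0) + adjEq (y :: t)
  | _ => 0

lemma lossChain : ∀ l : List α, ∃ w : List α, w <+ l ∧ w.Chain' (· ≠ ·) ∧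
    w.head? = l.head? ∧ l.length ≤ w.length + adjEq l := by
  intro l
  induction l with
  | nil => exact ⟨[], by simp [adjEq, List.Chain']⟩
  | cons x t ih =>
    cases t with
    | nil => exact ⟨[x], by simp [adjEq, List.Chain']⟩
    | cons y s =>
      obtain ⟨w', hsub, hch, hhd, hlen⟩ := ih
      have hw'ne : w' ≠ [] := by
        intro h; rw [h] at hhd; simp at hhd
      obtain ⟨z, w'', rfl⟩ := List.exists_cons_of_ne_nil hw'ne
      have hzy : z = y := by simpa using hhd
      by_cases hxy : x = y
      · refine ⟨z :: w'', (hsub.trans (List.sublist_cons_self x (y :: s))), hch, ?_, ?_⟩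
        · simp [hzy, hxy]
        · simp only [adjEq, if_pos hxy, List.length_cons] at *
          omega
      · refine ⟨x :: z :: w'', hsub.cons₂ x, ?_, by simp, ?_⟩
        · rw [List.Chain', List.isChain_cons_cons]
          exact ⟨by rw [hzy]; exact hxy, hch⟩
        · simp only [adjEq, if_neg hxy, List.length_cons] at *
          omega

variable (A : Finset α)

/-- list of (B-symbol, A-symbol) pairs at B→A boundaries -/
def blp : List α → List (α × α)
  | x :: y :: t => (if x ∉ A ∧ y ∈ A then [(x, y)] else []) ++ blp (y :: t)
  | _ => []

/-- count of A→B boundaries -/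
def abC : List α → ℕ
  | x :: y :: t => (if x ∈ A ∧ y ∉ A then 1 else 0) + abC (y :: t)
  | _ => 0

/-- flatten a pair list -/
def flatp : List (α × α) → List α
  | [] => []
  | (b, a) :: r => b :: a :: flatp r

/-- for each adjacent pair of boundary pairs with equal A-label, record the second B-symbol -/
def dupb : List (α × α) → List α
  | (_, a) :: (b, a') :: r => (if a = a' then [b] else []) ++ dupb ((b, a') :: r)
  | _ => []

lemma flatp_append : ∀ s t : List (α × α), flatp (s ++ t) = flatp s ++ flatp t := by
  intro s t
  induction s with
  | nil => rfl
  | cons p r ih => cases p; simp [flatp, ih]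

lemma blp_mem : ∀ l : List α, ∀ p ∈ blp A l, p.1 ∉ A ∧ p.2 ∈ A ∧ p.1 ∈ l ∧ p.2 ∈ l := by
  intro l
  induction l with
  | nil => intro p hp; simp [blp] at hp
  | cons x t ih =>
    cases t with
    | nil => intro p hp; simp [blp] at hp
    | cons y s =>
      intro p hp
      simp only [blp] at hp
      rcases List.mem_append.1 hp with h | h
      · by_cases hc : x ∉ A ∧ y ∈ A
        · rw [if_pos hc] at h
          simp only [List.mem_singleton] at h
          subst h
          exact ⟨hc.1, hc.2, by simp, by simp⟩
        · rw [if_neg hc] at h; simp at h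
      · obtain ⟨h1, h2, h3, h4⟩ := ih p h
        exact ⟨h1, h2, List.mem_cons_of_mem x h3, List.mem_cons_of_mem x h4⟩

lemma flat_both : ∀ l : List α, flatp (blp A l) <+ l ∧
    (∀ y t', l = y :: t' → y ∈ A → flatp (blp A l) <+ t') := by
  intro l
  induction l with
  | nil => simp [blp, flatp]
  | cons x t ih =>
    cases t with
    | nil => simp [blp, flatp]
    | cons y s =>
      constructor
      · by_cases hc : x ∉ A ∧ y ∈ A
        · have h2 := (ih).2 y s rfl hc.2
          simp only [blp, if_pos hc, flatp, List.cons_append, List.nil_append]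
          exact (h2.cons₂ y).cons₂ x
        · have h1 := (ih).1
          simp only [blp, if_neg hc, List.nil_append]
          exact h1.cons x
      · intro z t' heq hz
        have hxz : x = z := by injection heq
        have ht' : t' = y :: s := by injection heq with h1 h2; exact h2.symm
        subst hxz
        have hc : ¬ (x ∉ A ∧ y ∈ A) := by
          intro hc; exact hc.1 hz
        simp only [blp, if_neg hc, List.nil_append, ht']
        exact (ih).1

lemma blp_append_left : ∀ (P Q : List α), (∀ x ∈ P, x ∈ A) → blp A (P ++ Q) = blp A Q := by
  intro P
  induction P with
  | nil => intro Q _; rfl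
  | cons p P' ih =>
    intro Q hP
    have hp : p ∈ A := hP p (by simp)
    cases hPQ : P' ++ Q with
    | nil =>
      have : Q = [] := by
        rcases List.append_eq_nil_iff.1 hPQ with ⟨h1, h2⟩; exact h2
      subst this
      simp only [List.append_nil] at hPQ ⊢
      simp [hPQ, blp]
    | cons z zs =>
      have : blp A (p :: (P' ++ Q)) = blp A (P' ++ Q) := by
        rw [hPQ]
        simp only [blp]
        rw [if_neg (by intro hc; exact hc.1 hp)]
        simp
      rw [List.cons_append, this]
      exact ih Q (fun x hx => hP x (List.mem_cons_of_mem p hx))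

lemma map_snd_sub_flatp : ∀ s : List (α × α), s.map Prod.snd <+ flatp s := by
  intro s
  induction s with
  | nil => simp [flatp]
  | cons p r ih =>
    cases p with
    | mk b a => simpa [flatp] using (ih.cons₂ a).cons b

lemma adjEq_map_snd : ∀ s : List (α × α), adjEq (s.map Prod.snd) = (dupb s).length := by
  intro s
  induction s with
  | nil => simp [adjEq, dupb]
  | cons p r ih =>
    cases r with
    | nil => cases p; simp [adjEq, dupb]
    | cons q r' =>
      cases p with
      | mk c a =>
        cases q with
        | mk b a' =>
          have ihe : adjEq (a' :: map Prod.snd r') = (dupb ((b, a') :: r')).length := by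
            simpa [adjEq] using ih
          by_cases h : a = a' <;> simp [adjEq, dupb, h, ihe] <;> omega

lemma dupmem : ∀ (s : List (α × α)) (b' : α), b' ∈ dupb s →
    ∃ u c a₂ v, s = u ++ (c, a₂) :: (b', a₂) :: v := by
  intro s
  induction s with
  | nil => intro b' h; simp [dupb] at h
  | cons p r ih =>
    cases r with
    | nil => intro b' h; cases p; simp [dupb] at h
    | cons q r' =>
      intro b' hb
      cases p with
      | mk c a =>
        cases q with
        | mk b a' =>
          simp only [dupb] at hb
          rcases List.mem_append.1 hb with h | h
          · by_cases hc : a = a'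
            · rw [if_pos hc] at h
              simp only [List.mem_singleton] at h
              subst h
              exact ⟨[], c, a, r', by rw [hc]; simp⟩
            · rw [if_neg hc] at h; simp at h
          · obtain ⟨u, c₂, a₂, v, huv⟩ := ih b' h
            exact ⟨(c, a) :: u, c₂, a₂, v, by rw [List.cons_append, huv]⟩


lemma dup_pattern (r : List (α × α)) (b a' : α) (hmem : b ∈ dupb ((b, a') :: r)) :
    ∃ a₂, ((b, a₂) ∈ ((b, a') :: r) ∨ (b,a') = (b,a₂)) ∧ [b, a₂, b, a₂] <+ flatp ((b, a') :: r) := by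
  obtain ⟨u, c, a₂, v, huv⟩ := dupmem _ b hmem
  cases u with
  | nil =>
    simp only [List.nil_append, List.cons.injEq, Prod.mk.injEq] at huv
    obtain ⟨⟨hbc, ha⟩, hr⟩ := huv
    subst ha
    refine ⟨a', Or.inl (by rw [hr]; simp), ?_⟩
    rw [hr]
    simp only [flatp]
    exact ((((List.nil_sublist (flatp v)).cons₂ a').cons₂ b).cons₂ a').cons₂ b
  | cons w u' =>
    rw [List.cons_append] at huv
    simp only [List.cons.injEq] at huv
    obtain ⟨hw, hrr⟩ := huv
    refine ⟨a₂, Or.inl (by rw [hrr]; simp), ?_⟩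
    have hsub2 : [a₂, b, a₂] <+ flatp ((c, a₂) :: (b, a₂) :: v) := by
      simp only [flatp]
      exact ((((List.nil_sublist (flatp v)).cons₂ a₂).cons₂ b).cons₂ a₂).cons c
    have hsub3 : [a₂, b, a₂] <+ flatp r := by
      rw [hrr, flatp_append]
      exact hsub2.trans (List.sublist_append_right _ _)
    show [b, a₂, b, a₂] <+ flatp ((b, a') :: r)
    simp only [flatp]
    exact (hsub3.cons a').cons₂ b

lemma dupb_pairwise : ∀ (s : List (α × α)),
    (∀ b a₂, b ∉ A → a₂ ∈ A → ¬ ([b, a₂, b, a₂] <+ flatp s)) →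
    (∀ p ∈ s, p.1 ∉ A ∧ p.2 ∈ A) →
    (dupb s).Pairwise (· ≠ ·) := by
  intro s
  induction s with
  | nil => intro _ _; simp [dupb]
  | cons p r ih =>
    cases r with
    | nil => intro _ _; cases p; simp [dupb]
    | cons q r' =>
      intro hpat hcls
      cases p with
      | mk c a =>
      cases q with
      | mk b a' =>
      have hsubflat : flatp ((b, a') :: r') <+ flatp ((c, a) :: (b, a') :: r') := by
        simp only [flatp]
        exact (List.Sublist.refl _).cons a |>.cons c
      have hpat' : ∀ b₀ a₂, b₀ ∉ A → a₂ ∈ A → ¬ ([b₀, a₂, b₀, a₂] <+ flatp ((b, a') :: r')) :=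
        fun b₀ a₂ h1 h2 hsub => hpat b₀ a₂ h1 h2 (hsub.trans hsubflat)
      have hcls' : ∀ p ∈ ((b, a') :: r'), p.1 ∉ A ∧ p.2 ∈ A :=
        fun p hp => hcls p (List.mem_cons_of_mem _ hp)
      have ihp := ih hpat' hcls'
      by_cases hc : a = a'
      · simp only [dupb, if_pos hc, List.singleton_append]
        refine List.Pairwise.cons ?_ ihp
        intro z hz hbz
        subst hbz
        obtain ⟨a₂, hmem2, hsub⟩ := dup_pattern r' b a' hz
        have hbA : b ∉ A := (hcls (b, a') (by simp)).1
        have ha₂A : a₂ ∈ A := by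
          rcases hmem2 with h | h
          · exact (hcls' (b, a₂) h).2
          · have : a' = a₂ := by injection h
            rw [← this]
            exact (hcls (b, a') (by simp)).2
        exact hpat' b a₂ hbA ha₂A hsub
      · simp only [dupb, if_neg hc, List.nil_append]
        exact ihp

lemma abC_le : ∀ l : List α, (abC A l ≤ (blp A l).length + 1) ∧
    (∀ x t, l = x :: t → x ∉ A → abC A l ≤ (blp A l).length) := by
  intro l
  induction l with
  | nil => simp [abC, blp]
  | cons x t ih =>
    cases t with
    | nil => simp [abC, blp]
    | cons y s =>
      have ihy := ih
      constructor
      · by_cases hy : y ∈ A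
        · -- no AB boundary at head
          have h1 : abC A (x :: y :: s) = abC A (y :: s) := by
            simp only [abC]
            rw [if_neg (by intro hc; exact hc.2 hy)]
            omega
          by_cases hx : x ∈ A
          · rw [h1]
            have := ihy.1
            have hble : (blp A (y :: s)).length ≤ (blp A (x :: y :: s)).length := by
              simp only [blp]
              rw [List.length_append]; omega
            omega
          · -- x ∉ A, y ∈ A: BA boundary at head
            rw [h1]
            have h2 : (blp A (x :: y :: s)).length = (blp A (y :: s)).length + 1 := by
              simp only [blp]
              rw [if_pos ⟨hx, hy⟩, List.length_append]
              simp; omega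
            have := ihy.1
            omega
        · -- y ∉ A
          by_cases hx : x ∈ A
          · have h1 : abC A (x :: y :: s) = 1 + abC A (y :: s) := by
              simp only [abC]; rw [if_pos ⟨hx, hy⟩]
            have h2 : (blp A (x :: y :: s)).length = (blp A (y :: s)).length := by
              simp only [blp]
              rw [if_neg (by intro hc; exact hc.1 hx)]
              simp
            have := ihy.2 y s rfl hy
            omega
          · have h1 : abC A (x :: y :: s) = abC A (y :: s) := by
              simp only [abC]
              rw [if_neg (by intro hc; exact hx hc.1)]
              omega
            have h2 : (blp A (x :: y :: s)).length = (blp A (y :: s)).length := by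
              simp only [blp]
              rw [if_neg (by intro hc; exact hy hc.2)]
              simp
            have := ihy.2 y s rfl hy
            omega
      · intro z t' heq hz
        have hxz : x = z := by injection heq
        subst hxz
        have h1 : abC A (x :: y :: s) = abC A (y :: s) := by
          simp only [abC]
          rw [if_neg (by intro hc; exact hz hc.1)]
          omega
        by_cases hy : y ∈ A
        · have h2 : (blp A (x :: y :: s)).length = (blp A (y :: s)).length + 1 := by
            simp only [blp]
            rw [if_pos ⟨hz, hy⟩, List.length_append]
            simp; omega
          have := ihy.1
          omega
        · have h2 : (blp A (x :: y :: s)).length = (blp A (y :: s)).length := by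
            simp only [blp]
            rw [if_neg (by intro hc; exact hy hc.2)]
            simp
          have := ihy.2 y s rfl hy
          omega

lemma head_mono (x : α) (t : List α) :
    abC A t ≤ abC A (x :: t) ∧ (blp A t).length ≤ (blp A (x :: t)).length := by
  cases t with
  | nil => simp [abC, blp]
  | cons y s =>
    constructor
    · simp only [abC]; omega
    · simp only [blp, List.length_append]; omega

lemma splitloss : ∀ l : List α, l.Chain' (· ≠ ·) →
    ∃ vA vB : List α, vA <+ l ∧ vB <+ l ∧ (∀ x ∈ vA, x ∈ A) ∧ (∀ x ∈ vB, x ∉ A) ∧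
      vA.Chain' (· ≠ ·) ∧ vB.Chain' (· ≠ ·) ∧
      vA.head? = (l.filter (fun z => decide (z ∈ A))).head? ∧
      vB.head? = (l.filter (fun z => decide (z ∉ A))).head? ∧
      l.length ≤ vA.length + vB.length + (abC A l + (blp A l).length) := by
  intro l
  induction l with
  | nil => exact fun _ => ⟨[], [], by simp [abC, blp, List.Chain']⟩
  | cons x t ih =>
    intro hchain
    obtain ⟨vA, vB, hsA, hsB, hmA, hmB, hcA, hcB, hhA, hhB, hlen⟩ := ih hchain.tail
    have hmono := head_mono A x t
    by_cases hx : x ∈ A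
    · -- filter computations
      have hfA : (x :: t).filter (fun z => decide (z ∈ A)) =
          x :: t.filter (fun z => decide (z ∈ A)) := by
        rw [List.filter_cons, if_pos (by simpa using hx)]
      have hfB : (x :: t).filter (fun z => decide (z ∉ A)) =
          t.filter (fun z => decide (z ∉ A)) := by
        rw [List.filter_cons, if_neg (by simpa using hx)]
      by_cases hhead : (t.filter (fun z => decide (z ∈ A))).head? = some x
      · -- skip x; a class switch A→B occurs at the head
        obtain ⟨y, t', rfl⟩ : ∃ y t', t = y :: t' := by
          cases t with
          | nil => simp at hhead
          | cons y t' => exact ⟨y, t', rfl⟩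
        have hy : y ∉ A := by
          intro hyA
          have : (y :: t').filter (fun z => decide (z ∈ A)) =
              y :: t'.filter (fun z => decide (z ∈ A)) := by
            rw [List.filter_cons, if_pos (by simpa using hyA)]
          rw [this] at hhead
          simp only [List.head?_cons, Option.some.injEq] at hhead
          exact (List.isChain_cons_cons.1 hchain).1 hhead.symm
        have habc : abC A (x :: y :: t') = 1 + abC A (y :: t') := by
          simp only [abC]; rw [if_pos ⟨hx, hy⟩]
        have hblp : (blp A (x :: y :: t')).length = (blp A (y :: t')).length := by
          simp only [blp]; rw [if_neg (by intro hc; exact hc.1 hx)]; simp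
        refine ⟨vA, vB, hsA.cons x, hsB.cons x, hmA, hmB, hcA, hcB, ?_, ?_, ?_⟩
        · rw [hfA, hhA]
          simp only [List.head?_cons]
          exact hhead
        · rw [hfB]; exact hhB
        · simp only [List.length_cons] at hlen ⊢
          omega
      · -- prepend x to vA
        refine ⟨x :: vA, vB, hsA.cons₂ x, hsB.cons x, ?_, hmB, ?_, hcB, ?_, ?_, ?_⟩
        · intro z hz
          rcases List.mem_cons.1 hz with rfl | hz
          · exact hx
          · exact hmA z hz
        · rw [List.Chain', List.isChain_cons]
          refine ⟨?_, hcA⟩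
          intro y hy hxy
          apply hhead
          have h1 : vA.head? = some y := hy
          rw [← hhA, h1, ← hxy]
        · rw [hfA]; simp
        · rw [hfB]; exact hhB
        · simp only [List.length_cons] at hlen ⊢
          omega
    · -- x ∉ A, symmetric
      have hfA : (x :: t).filter (fun z => decide (z ∈ A)) =
          t.filter (fun z => decide (z ∈ A)) := by
        rw [List.filter_cons, if_neg (by simpa using hx)]
      have hfB : (x :: t).filter (fun z => decide (z ∉ A)) =
          x :: t.filter (fun z => decide (z ∉ A)) := by
        rw [List.filter_cons, if_pos (by simpa using hx)]
      by_cases hhead : (t.filter (fun z => decide (z ∉ A))).head? = some x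
      · obtain ⟨y, t', rfl⟩ : ∃ y t', t = y :: t' := by
          cases t with
          | nil => simp at hhead
          | cons y t' => exact ⟨y, t', rfl⟩
        have hy : y ∈ A := by
          by_contra hyA
          have : (y :: t').filter (fun z => decide (z ∉ A)) =
              y :: t'.filter (fun z => decide (z ∉ A)) := by
            rw [List.filter_cons, if_pos (by simpa using hyA)]
          rw [this] at hhead
          simp only [List.head?_cons, Option.some.injEq] at hhead
          exact (List.isChain_cons_cons.1 hchain).1 hhead.symm
        have hblp : (blp A (x :: y :: t')).length = 1 + (blp A (y :: t')).length := by
          simp only [blp]; rw [if_pos ⟨hx, hy⟩]; simp; omega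
        have habc : abC A (x :: y :: t') = abC A (y :: t') := by
          simp only [abC]; rw [if_neg (by intro hc; exact hx hc.1)]; omega
        refine ⟨vA, vB, hsA.cons x, hsB.cons x, hmA, hmB, hcA, hcB, ?_, ?_, ?_⟩
        · rw [hfA]; exact hhA
        · rw [hfB, hhB]
          simp only [List.head?_cons]
          exact hhead
        · simp only [List.length_cons] at hlen ⊢
          omega
      · refine ⟨vA, x :: vB, hsA.cons x, hsB.cons₂ x, hmA, ?_, hcA, ?_, ?_, ?_, ?_⟩
        · intro z hz
          rcases List.mem_cons.1 hz with rfl | hz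
          · exact hx
          · exact hmB z hz
        · rw [List.Chain', List.isChain_cons]
          refine ⟨?_, hcB⟩
          intro y hy hxy
          apply hhead
          have h1 : vB.head? = some y := hy
          rw [← hhB, h1, ← hxy]
        · rw [hfA]; exact hhA
        · rw [hfB]; simp
        · simp only [List.length_cons] at hlen ⊢
          omega

lemma take_card_succ (l : List α) (q : ℕ) :
    (l.take (q + 1)).toFinset.card ≤ (l.take q).toFinset.card + 1 := by
  rw [List.take_succ]
  rw [List.toFinset_append]
  cases h : l[q]? with
  | none => simp
  | some x =>
    simp only [Option.toList_some]
    have : (l.take q).toFinset ∪ [x].toFinset = insert x (l.take q).toFinset := by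
      ext z; simp [or_comm]
    rw [this]
    exact Finset.card_insert_le _ _

lemma prefix_card (l : List α) (μ : ℕ) (hμ : μ ≤ l.toFinset.card) :
    ∃ p, (l.take p).toFinset.card = μ := by
  classical
  have hex : ∃ p, μ ≤ (l.take p).toFinset.card := ⟨l.length, by rwa [List.take_length]⟩
  set p := Nat.find hex with hp
  have hspec : μ ≤ (l.take p).toFinset.card := Nat.find_spec hex
  refine ⟨p, ?_⟩
  rcases Nat.eq_zero_or_pos p with h0 | hpos
  · rw [h0] at hspec ⊢
    simp only [List.take_zero] at hspec ⊢
    simp at hspec ⊢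
    omega
  · obtain ⟨q, hpq⟩ : ∃ q, p = q + 1 := ⟨p - 1, by omega⟩
    have hq : ¬ μ ≤ (l.take q).toFinset.card := Nat.find_min hex (by omega)
    have h2 := take_card_succ l q
    rw [hpq] at hspec ⊢
    omega


lemma log_shrink {m k : ℕ} (h : 4 * (m + 1) ≤ 3 * (k + 1)) :
    Real.log (m + 1) ≤ Real.log (k + 1) - 1/4 := by
  have h0 : (0:ℝ) < (m:ℝ) + 1 := by positivity
  have h1 : ((m:ℝ) + 1) ≤ (3/4) * ((k:ℝ) + 1) := by
    have : (4:ℝ) * (m + 1) ≤ 3 * (k + 1) := by exact_mod_cast h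
    linarith
  have h2 : Real.log ((m:ℝ) + 1) ≤ Real.log ((3/4) * ((k:ℝ)+1)) := Real.log_le_log h0 h1
  have h3 : Real.log ((3/4) * ((k:ℝ)+1)) = Real.log (3/4) + Real.log ((k:ℝ)+1) := by
    rw [Real.log_mul (by norm_num) (by positivity)]
  have h4 : Real.log (3/4 : ℝ) = - Real.log (4/3 : ℝ) := by
    rw [show (3/4 : ℝ) = (4/3 : ℝ)⁻¹ by norm_num, Real.log_inv]
  have h5 : (1/4 : ℝ) ≤ Real.log (4/3 : ℝ) := by
    have := Real.one_sub_inv_le_log_of_pos (show (0:ℝ) < 4/3 by norm_num)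
    have hinv : ((4:ℝ)/3)⁻¹ = 3/4 := by norm_num
    rw [hinv] at this
    linarith
  calc Real.log ((m:ℝ) + 1) ≤ Real.log (3/4) + Real.log ((k:ℝ)+1) := by rw [← h3]; exact h2
  _ = Real.log ((k:ℝ)+1) - Real.log (4/3) := by rw [h4]; ring
  _ ≤ Real.log ((k:ℝ)+1) - 1/4 := by linarith


lemma baBound (l P Q : List α) (A : Finset α) (hl : l = P ++ Q) (hP : ∀ x ∈ P, x ∈ A)
    (hPA : ∀ a ∈ A, a ∈ P) (hch : l.Chain' (· ≠ ·)) (hna : NoAbaba l) :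
    (blp A l).length ≤ 2 * A.card + (l.toFinset \ A).card := by
  have hblpPQ : blp A l = blp A Q := by rw [hl]; exact blp_append_left A P Q hP
  have hflatQ : flatp (blp A l) <+ Q := by rw [hblpPQ]; exact (flat_both A Q).1
  have hblQ : (blp A l).map Prod.snd <+ Q := (map_snd_sub_flatp _).trans hflatQ
  have hprepend : ∀ a' ∈ A, ∀ X : List α, X <+ Q → (a' :: X) <+ l := by
    intro a' ha' X hX
    obtain ⟨P₁, P₂, hP12⟩ := List.append_of_mem (hPA a' ha')
    rw [hl, hP12, List.append_assoc]
    refine List.Sublist.trans ?_ (List.sublist_append_right P₁ _)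
    rw [List.cons_append]
    exact (hX.trans (List.sublist_append_right P₂ Q)).cons₂ a'
  have hNoAbab : NoAbab ((blp A l).map Prod.snd) := by
    intro a b hab hsub
    have hbA : b ∈ A := by
      have hbmem : b ∈ (blp A l).map Prod.snd := hsub.subset (by simp)
      obtain ⟨q, hq, hq2⟩ := List.mem_map.1 hbmem
      rw [← hq2]
      exact (blp_mem A l q hq).2.1
    have hsubQ : [a, b, a, b] <+ Q := hsub.trans hblQ
    have hsub5 : [b, a, b, a, b] <+ l := hprepend b hbA _ hsubQ
    exact hna b a hab.symm hsub5
  obtain ⟨w, hwsub, hwch, _, hwlen⟩ := lossChain ((blp A l).map Prod.snd)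
  have hw2 : w.length ≤ 2 * w.toFinset.card := ds2 w hwch (hNoAbab.sublist hwsub)
  have hwA : w.toFinset ⊆ A := by
    intro z hz
    have : z ∈ (blp A l).map Prod.snd := hwsub.subset (List.mem_toFinset.1 hz)
    obtain ⟨q, hq, hq2⟩ := List.mem_map.1 this
    rw [← hq2]
    exact (blp_mem A l q hq).2.1
  have hwcard : w.toFinset.card ≤ A.card := Finset.card_le_card hwA
  have hdup : adjEq ((blp A l).map Prod.snd) = (dupb (blp A l)).length := adjEq_map_snd _
  have hpat : ∀ b a₂, b ∉ A → a₂ ∈ A → ¬ ([b, a₂, b, a₂] <+ flatp (blp A l)) := by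
    intro b a₂ hb ha₂ hsub
    have h4 : [b, a₂, b, a₂] <+ Q := hsub.trans hflatQ
    have h5 : [a₂, b, a₂, b, a₂] <+ l := hprepend a₂ ha₂ _ h4
    exact hna a₂ b (fun h => hb (h ▸ ha₂)) h5
  have hpw : (dupb (blp A l)).Pairwise (· ≠ ·) :=
    dupb_pairwise A _ hpat
      (fun q hq => ⟨(blp_mem A l q hq).1, (blp_mem A l q hq).2.1⟩)
  have hnd : (dupb (blp A l)).Nodup := hpw
  have hdcard : (dupb (blp A l)).length ≤ (l.toFinset \ A).card := by
    have heq : (dupb (blp A l)).toFinset.card = (dupb (blp A l)).length :=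
      List.toFinset_card_of_nodup hnd
    rw [← heq]
    refine Finset.card_le_card ?_
    intro z hz
    have hz' : z ∈ dupb (blp A l) := List.mem_toFinset.1 hz
    obtain ⟨u, c, a₂, v, huv⟩ := dupmem _ z hz'
    have hzmem : (z, a₂) ∈ blp A l := by rw [huv]; simp
    obtain ⟨h1, _, h3, _⟩ := blp_mem A l (z, a₂) hzmem
    exact Finset.mem_sdiff.2 ⟨List.mem_toFinset.2 h3, h1⟩
  have hmaplen : ((blp A l).map Prod.snd).length = (blp A l).length := by simp
  omega

theorem mainBound : ∀ (n : ℕ) (l : List α), l.Chain' (· ≠ ·) → NoAbaba l →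
    l.toFinset.card ≤ n → (l.length : ℝ) ≤ 30 * n * Real.log (n + 1) := by
  intro n
  induction n using Nat.strong_induction_on with
  | _ n ih =>
  intro l hch hna hcard
  rcases Nat.lt_or_ge l.toFinset.card n with hlt | hge
  · -- card < n
    have hn1 : 1 ≤ n := by omega
    have hbound := ih (n-1) (by omega) l hch hna (by omega)
    refine hbound.trans ?_
    have hn1r : (1:ℝ) ≤ (n:ℝ) := by exact_mod_cast hn1
    have hc1 : ((n-1 : ℕ) : ℝ) = (n:ℝ) - 1 := by
      rw [Nat.cast_sub hn1]; norm_num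
    rw [hc1]
    have hlog1 : Real.log ((n:ℝ) - 1 + 1) ≤ Real.log ((n:ℝ) + 1) := by
      apply Real.log_le_log (by linarith) (by linarith)
    have hlognn : 0 ≤ Real.log ((n:ℝ) - 1 + 1) := Real.log_nonneg (by linarith)
    nlinarith [Real.log_nonneg (show (1:ℝ) ≤ (n:ℝ)+1 by linarith)]
  · have hcn : l.toFinset.card = n := le_antisymm hcard hge
    rcases Nat.lt_or_ge n 2 with hn2 | hn2
    · interval_cases n
      · -- n = 0
        have h0 : l.toFinset = ∅ := Finset.card_eq_zero.1 hcn
        have hl0 : l = [] := (List.toFinset_eq_empty_iff _).1 h0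
        simp [hl0]
      · -- n = 1
        have hlen1 : l.length ≤ 1 := by
          by_contra hcontra
          push_neg at hcontra
          have hne : l ≠ [] := by
            intro h; rw [h] at hcontra; simp at hcontra
          obtain ⟨x, t, rfl⟩ := List.exists_cons_of_ne_nil hne
          have hne2 : t ≠ [] := by
            intro h; rw [h] at hcontra; simp at hcontra
          obtain ⟨y, s, rfl⟩ := List.exists_cons_of_ne_nil hne2
          have hxy : x ≠ y := (List.isChain_cons_cons.1 hch).1
          have : 1 < (x :: y :: s).toFinset.card := by
            apply Finset.one_lt_card.2
            exact ⟨x, by simp, y, by simp, hxy⟩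
          omega
        have hlog2 : (1/2 : ℝ) ≤ Real.log 2 := by
          have := Real.one_sub_inv_le_log_of_pos (show (0:ℝ) < 2 by norm_num)
          norm_num at this
          linarith
        have hl1 : (l.length : ℝ) ≤ 1 := by exact_mod_cast hlen1
        push_cast
        norm_num
        nlinarith
    · -- n ≥ 2
      have hμ1 : 1 ≤ n / 2 := by omega
      have hμn : n / 2 < n := by omega
      set μ := n / 2 with hμdef
      have hμle : μ ≤ l.toFinset.card := by omega
      obtain ⟨p, hp⟩ := prefix_card l μ hμle
      set A := (l.take p).toFinset with hA
      have hPQ : l = l.take p ++ l.drop p := (List.take_append_drop p l).symm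
      have hPmem : ∀ x ∈ l.take p, x ∈ A := fun x hx => List.mem_toFinset.2 hx
      have hPA : ∀ a ∈ A, a ∈ l.take p := fun a ha => List.mem_toFinset.1 ha
      have hAcard : A.card = μ := hp
      have hAsub : A ⊆ l.toFinset := by
        intro z hz
        exact List.mem_toFinset.2 ((List.take_sublist p l).subset (hPA z hz))
      have hsd : (l.toFinset \ A).card = n - μ := by
        rw [Finset.card_sdiff_of_subset hAsub, hcn, hAcard]
      have hba := baBound l (l.take p) (l.drop p) A hPQ hPmem hPA hch hna
      have habl := (abC_le A l).1
      obtain ⟨vA, vB, hsA, hsB, hmA, hmB, hcA, hcB, _, _, hlen⟩ := splitloss A l hch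
      have hvA : vA.toFinset.card ≤ μ := by
        refine le_trans (Finset.card_le_card ?_) hAcard.le
        intro z hz; exact hmA z (List.mem_toFinset.1 hz)
      have hvB : vB.toFinset.card ≤ n - μ := by
        rw [← hsd]
        refine Finset.card_le_card ?_
        intro z hz
        have hzl : z ∈ l := hsB.subset (List.mem_toFinset.1 hz)
        exact Finset.mem_sdiff.2 ⟨List.mem_toFinset.2 hzl, hmB z (List.mem_toFinset.1 hz)⟩
      have ihA := ih μ hμn vA hcA (hna.sublist hsA) hvA
      have ihB := ih (n - μ) (by omega) vB hcB (hna.sublist hsB) hvB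
      have h2 : (blp A l).length ≤ 2 * μ + (n - μ) := by
        calc (blp A l).length ≤ 2 * A.card + (l.toFinset \ A).card := hba
        _ = 2 * μ + (n - μ) := by rw [hAcard, hsd]
      have hnat : l.length ≤ vA.length + vB.length + (4 * n + 1) := by omega
      -- real arithmetic
      have hr : (l.length : ℝ) ≤ (vA.length : ℝ) + (vB.length : ℝ) + (4 * (n:ℝ) + 1) := by
        have := hnat
        push_cast
        exact_mod_cast hnat
      have hshrA : Real.log ((μ:ℝ) + 1) ≤ Real.log ((n:ℝ) + 1) - 1/4 :=
        log_shrink (by omega)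
      have hshrB : Real.log (((n - μ : ℕ):ℝ) + 1) ≤ Real.log ((n:ℝ) + 1) - 1/4 :=
        log_shrink (by omega)
      have hμcast : ((n - μ : ℕ) : ℝ) = (n:ℝ) - (μ:ℝ) := by
        push_cast [Nat.cast_sub (le_of_lt hμn)]
        ring
      have hμpos : (0:ℝ) ≤ (μ:ℝ) := by positivity
      have hnμpos : (0:ℝ) ≤ ((n - μ:ℕ):ℝ) := by positivity
      have hμlen : (μ:ℝ) ≤ (n:ℝ) := by exact_mod_cast le_of_lt hμn
      calc (l.length : ℝ) ≤ (vA.length : ℝ) + (vB.length : ℝ) + (4 * (n:ℝ) + 1) := hr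
      _ ≤ 30 * μ * Real.log ((μ:ℝ)+1) + 30 * ((n-μ:ℕ):ℝ) * Real.log (((n-μ:ℕ):ℝ)+1)
            + (4*(n:ℝ)+1) := by linarith
      _ ≤ 30 * μ * (Real.log ((n:ℝ)+1) - 1/4)
            + 30 * ((n-μ:ℕ):ℝ) * (Real.log ((n:ℝ)+1) - 1/4) + (4*(n:ℝ)+1) := by
            have g1 : 30 * (μ:ℝ) * Real.log ((μ:ℝ)+1)
                ≤ 30 * (μ:ℝ) * (Real.log ((n:ℝ)+1) - 1/4) := by
              apply mul_le_mul_of_nonneg_left hshrA (by positivity)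
            have g2 : 30 * ((n-μ:ℕ):ℝ) * Real.log (((n-μ:ℕ):ℝ)+1)
                ≤ 30 * ((n-μ:ℕ):ℝ) * (Real.log ((n:ℝ)+1) - 1/4) := by
              apply mul_le_mul_of_nonneg_left hshrB (by positivity)
            linarith
      _ ≤ 30 * (n:ℝ) * Real.log ((n:ℝ)+1) := by
            rw [hμcast]
            have hn2r : (2:ℝ) ≤ (n:ℝ) := by exact_mod_cast hn2
            nlinarith [Real.log_nonneg (show (1:ℝ) ≤ (n:ℝ)+1 by linarith)]

end DS3Aux

/-- A Davenport–Schinzel sequence of order 3 on `n` symbols (no immediate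
repetitions, no alternating subsequence `a b a b a` of length 5) has length `O(n log n)`:
there is a universal constant `C > 0` with `L ≤ C · n · log (n + 1)`. -/
theorem ds_order_three_length :
    ∃ C : ℝ, 0 < C ∧ ∀ (n L : ℕ) (u : Fin L → Fin n), IsDS 3 u →
      (L : ℝ) ≤ C * n * Real.log (n + 1) := by
  refine ⟨30, by norm_num, ?_⟩
  intro n L u hDS
  obtain ⟨hNR, hNA⟩ := hDS
  set l := List.ofFn u with hl
  have hlen : l.length = L := List.length_ofFn (f := u)
  have hch : l.Chain' (· ≠ ·) := by
    rw [List.Chain', List.isChain_iff_getElem]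
    intro i hi
    show l.get ⟨i, by omega⟩ ≠ l.get ⟨i + 1, hi⟩
    have hiL : i + 1 < L := by rw [hlen] at hi; omega
    have e1 : l.get ⟨i, by omega⟩ = u ⟨i, by omega⟩ := by
      rw [List.get_ofFn]
      congr 1
    have e2 : l.get ⟨i + 1, by omega⟩ = u ⟨i + 1, hiL⟩ := by
      rw [List.get_ofFn]
      congr 1
    rw [e1, e2]
    exact hNR ⟨i, by omega⟩ hiL
  have hNA' : DS3Aux.NoAbaba l := by
    intro a b hab hsub
    rw [List.sublist_iff_exists_fin_orderEmbedding_get_eq] at hsub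
    obtain ⟨f, hf⟩ := hsub
    have h5 : ([a, b, a, b, a] : List (Fin n)).length = 5 := rfl
    apply hNA
    have hcast : l.length = L := hlen
    refine ⟨a, b, fun j => Fin.cast hcast (f (Fin.cast h5.symm j)), hab, ?_, ?_⟩
    · intro j k hjk
      have h1 : f (Fin.cast h5.symm j) < f (Fin.cast h5.symm k) := by
        apply f.strictMono
        exact hjk
      exact h1
    · intro j
      have hval := hf (Fin.cast h5.symm j)
      have hgu : l.get (f (Fin.cast h5.symm j)) =
          u (Fin.cast hcast (f (Fin.cast h5.symm j))) := by
        rw [List.get_ofFn]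
      rw [← hgu, ← hval]
      fin_cases j <;> rfl
  have hcard : l.toFinset.card ≤ n := by
    calc l.toFinset.card ≤ (Finset.univ : Finset (Fin n)).card :=
          Finset.card_le_card (Finset.subset_univ _)
    _ = n := by simp
  have := DS3Aux.mainBound n l hch hNA' hcard
  rw [hlen] at this
  exact this
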